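/- Define a sequence of functions u_k : ℝ × ℝ → ℝ recursively by u_0(x, t) = x² and u_{k+1}(x, t) = ∫₀ᵗ [ ∑_{r=0}^{k} (d²/dx²)[u_r(x/2, τ/2)] · (d/dx)[u_{k−r}(x/2, τ/2)] − (1/8)(∂u_k/∂x)(x, τ) − u_k(x, τ) ] dτ, where (d/dx) and (d²/dx²) act on the composed functions x ↦ u_r(x/2, τ/2). Then for every k ≥ 0 and all x, t ∈ ℝ, u_k(x, t) = x² · (−t)^k / k!; consequently ∑_{k=0}^{∞} u_k(x, t) = x²·e^{−t}. -/

import Mathlib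

open Finset

private lemma deriv_sq_mul (c x : ℝ) : deriv (fun y : ℝ => y ^ 2 * c) x = 2 * x * c := by
  simpa [mul_comm] using ((hasDerivAt_pow 2 x).mul_const c).deriv

private lemma iter2_sq_mul (c x : ℝ) : iteratedDeriv 2 (fun y : ℝ => y ^ 2 * c) x = 2 * c := by
  rw [show (2:ℕ) = 1 + 1 from rfl, iteratedDeriv_succ, iteratedDeriv_one]
  have h1 : deriv (fun y : ℝ => y ^ 2 * c) = fun y : ℝ => 2 * y * c :=
    funext fun y => deriv_sq_mul c y
  rw [h1]
  have : ∀ y : ℝ, HasDerivAt (fun y : ℝ => 2 * y * c) (2 * c) y := by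
    intro y
    simpa [mul_comm, mul_assoc] using (((hasDerivAt_id y).const_mul 2).mul_const c)
  exact (this x).deriv

private lemma sum_inv_fact (n : ℕ) :
    ∑ r ∈ range (n+1), ((1:ℝ)/(r.factorial * (n-r).factorial)) = 2^n / n.factorial := by
  rw [eq_div_iff (by positivity : (n.factorial:ℝ) ≠ 0), Finset.sum_mul]
  have h2 : ((2:ℝ))^n = ((2^n : ℕ) : ℝ) := by push_cast; ring
  rw [h2, ← Nat.sum_range_choose n, Nat.cast_sum]
  refine Finset.sum_congr rfl fun r hr => ?_
  have hle : r ≤ n := Nat.lt_succ_iff.mp (Finset.mem_range.mp hr)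
  have := Nat.choose_mul_factorial_mul_factorial hle
  have hr0 : (r.factorial : ℝ) ≠ 0 := by positivity
  have hr1 : ((n-r).factorial : ℝ) ≠ 0 := by positivity
  field_simp
  rw [← this]; push_cast; ring

theorem hptm_iterates_ex3_classical
    (u : ℕ → ℝ → ℝ → ℝ)
    (h0 : ∀ x t : ℝ, u 0 x t = x ^ 2)
    (hrec : ∀ (k : ℕ) (x t : ℝ),
      u (k + 1) x t =
        ∫ τ in (0:ℝ)..t,
          ((∑ r ∈ Finset.range (k + 1),
              iteratedDeriv 2 (fun y => u r (y / 2) (τ / 2)) x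
                * deriv (fun y => u (k - r) (y / 2) (τ / 2)) x)
            - (1 / 8) * deriv (fun y => u k y τ) x
            - u k x τ)) :
    (∀ (k : ℕ) (x t : ℝ), u k x t = x ^ 2 * (-t) ^ k / (Nat.factorial k)) ∧
    (∀ x t : ℝ, HasSum (fun k : ℕ => u k x t) (x ^ 2 * Real.exp (-t))) := by
  have key : ∀ (k : ℕ) (x t : ℝ), u k x t = x ^ 2 * (-t) ^ k / (Nat.factorial k) := by
    intro k
    induction k using Nat.strong_induction_on with
    | _ k IH =>
      match k with
      | 0 => intro x t; simp [h0]
      | k + 1 =>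
        intro x t
        have hF : ∀ τ : ℝ,
            ((∑ r ∈ Finset.range (k + 1),
              iteratedDeriv 2 (fun y => u r (y / 2) (τ / 2)) x
                * deriv (fun y => u (k - r) (y / 2) (τ / 2)) x)
            - (1 / 8) * deriv (fun y => u k y τ) x
            - u k x τ) = (-(x ^ 2 * (-1) ^ k / (Nat.factorial k))) * τ ^ k := by
          intro τ
          have hfun : ∀ r : ℕ, r ≤ k →
              (fun y : ℝ => u r (y / 2) (τ / 2))
                = fun y : ℝ => y ^ 2 * ((-(τ/2)) ^ r / (Nat.factorial r) / 4) := by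
            intro r hr
            funext y
            rw [IH r (Nat.lt_succ_of_le hr)]
            ring
          have hsum : (∑ r ∈ Finset.range (k + 1),
              iteratedDeriv 2 (fun y => u r (y / 2) (τ / 2)) x
                * deriv (fun y => u (k - r) (y / 2) (τ / 2)) x)
              = x * (-τ) ^ k / (4 * Nat.factorial k) := by
            have step : ∀ r ∈ Finset.range (k + 1),
                iteratedDeriv 2 (fun y => u r (y / 2) (τ / 2)) x
                  * deriv (fun y => u (k - r) (y / 2) (τ / 2)) x
                = (x * (-(τ/2)) ^ k / 4) *
                    ((1:ℝ)/(Nat.factorial r * Nat.factorial (k - r))) := by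
              intro r hr
              have hle : r ≤ k := Nat.lt_succ_iff.mp (Finset.mem_range.mp hr)
              rw [hfun r hle, hfun (k - r) (Nat.sub_le k r), iter2_sq_mul, deriv_sq_mul]
              have hpow : (-(τ/2)) ^ k = (-(τ/2)) ^ r * (-(τ/2)) ^ (k - r) := by
                rw [← pow_add, Nat.add_sub_cancel' hle]
              rw [hpow]
              have hr0 : (Nat.factorial r : ℝ) ≠ 0 := by positivity
              have hr1 : (Nat.factorial (k-r) : ℝ) ≠ 0 := by positivity
              field_simp
              ring
            rw [Finset.sum_congr rfl step, ← Finset.mul_sum, sum_inv_fact]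
            have h2 : (-(τ/2)) ^ k = (-τ) ^ k / 2 ^ k := by
              rw [show -(τ/2) = (-τ)/2 by ring, div_pow]
            rw [h2]
            have hk : (Nat.factorial k : ℝ) ≠ 0 := by positivity
            have h2k : ((2:ℝ)) ^ k ≠ 0 := by positivity
            field_simp
          have hderiv : deriv (fun y => u k y τ) x = 2 * x * ((-τ) ^ k / Nat.factorial k) := by
            have : (fun y : ℝ => u k y τ) = fun y : ℝ => y ^ 2 * ((-τ) ^ k / Nat.factorial k) := by
              funext y; rw [IH k (Nat.lt_succ_self k)]; ring
            rw [this, deriv_sq_mul]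
          rw [hsum, hderiv, IH k (Nat.lt_succ_self k)]
          have hk : (Nat.factorial k : ℝ) ≠ 0 := by positivity
          have hnt : (-τ) ^ k = (-1) ^ k * τ ^ k := by rw [← neg_one_mul, mul_pow]
          rw [hnt]
          field_simp
          ring
        rw [hrec k x t,
          intervalIntegral.integral_congr (g := fun τ : ℝ =>
            (-(x ^ 2 * (-1) ^ k / (Nat.factorial k))) * τ ^ k) (fun τ _ => hF τ)]
        rw [intervalIntegral.integral_const_mul, integral_pow]
        have hk : (Nat.factorial k : ℝ) ≠ 0 := by positivity
        have hfact : (Nat.factorial (k+1) : ℝ) = (k+1) * Nat.factorial k := by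
          rw [Nat.factorial_succ]; push_cast; ring
        have hnt : (-t) ^ (k+1) = (-1) ^ (k+1) * t ^ (k+1) := by rw [← neg_one_mul, mul_pow]
        rw [hnt, hfact, pow_succ]
        have hk1 : ((k:ℝ)+1) ≠ 0 := by positivity
        field_simp
        ring
  refine ⟨key, fun x t => ?_⟩
  have h1 : HasSum (fun n : ℕ => (-t) ^ n / n.factorial) (Real.exp (-t)) := by
    rw [Real.exp_eq_exp_ℝ]
    exact NormedSpace.expSeries_div_hasSum_exp (-t)
  have h2 := h1.mul_left (x ^ 2)
  have heq : (fun k : ℕ => u k x t) = fun n : ℕ => x ^ 2 * ((-t) ^ n / n.factorial) :=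
    funext fun n => by rw [key n x t]; ring
  rw [heq]
  exact h2
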